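/- Let φ(z, z̄, u) be a formal power series in (z, z̄, u) ∈ ℂⁿ × ℂⁿ × ℝ^d with values in ℂ^d, without constant and linear terms. Define L̃^w := i(1 - iφ_u)^{-1} φ_z · e(z) where e(z) is the Euler vector field. Then for all integers a ≥ 1, b, c ≥ 0, the derivative polynomial satisfies L̃^w_{z^a z̄^b u^c} = i a φ_{z^a z̄^b u^c} + R_{a,b,c}(φ_*), where R_{a,b,c} is a universal polynomial in the derivative polynomials of φ at 0 of total order less than a+b+c. Consequently, given the formal series L̃^w and the requirement φ_{z̄^b u^c} = 0 for all b, c (no harmonic terms), the formal series φ is uniquely determined. -/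

import Mathlib

/-- The variables `(z, z̄, u)` of the formal power series. -/
abbrev Var (n d : ℕ) := Fin n ⊕ Fin n ⊕ Fin d

/-- Formal partial derivative of a multivariate formal power series. -/
noncomputable def psDeriv {σ : Type*} [DecidableEq σ] (i : σ) (f : MvPowerSeries σ ℂ) :
    MvPowerSeries σ ℂ :=
  fun m => ((m i : ℂ) + 1) * MvPowerSeries.coeff (m + Finsupp.single i 1) f

/-- Degree of a monomial in the `z`-variables. -/
def degZ {n d : ℕ} (m : Var n d →₀ ℕ) : ℕ := ∑ j : Fin n, m (Sum.inl j)

/-- Degree of a monomial in the `z̄`-variables. -/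
def degZb {n d : ℕ} (m : Var n d →₀ ℕ) : ℕ := ∑ j : Fin n, m (Sum.inr (Sum.inl j))

/-- Degree of a monomial in the `u`-variables. -/
def degU {n d : ℕ} (m : Var n d →₀ ℕ) : ℕ := ∑ k : Fin d, m (Sum.inr (Sum.inr k))

/-- The derivative polynomial `h_{z^a z̄^b u^c}` of a formal power series `h`
(formula (4.5)). -/
noncomputable def dpoly {n d : ℕ} (a b c : ℕ) (f : MvPowerSeries (Var n d) ℂ) :
    MvPowerSeries (Var n d) ℂ :=
  fun m => if degZ m = a ∧ degZb m = b ∧ degU m = c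
    then (a.factorial * b.factorial * c.factorial : ℂ) * MvPowerSeries.coeff m f else 0

/-- `φ` has no constant and no linear terms. -/
def NoConstLin {n d : ℕ} (φ : Fin d → MvPowerSeries (Var n d) ℂ) : Prop :=
  ∀ (k : Fin d) (m : Var n d →₀ ℕ), degZ m + degZb m + degU m ≤ 1 →
    MvPowerSeries.coeff m (φ k) = 0

/-- `Lt` is the evaluation `L̃^w = i (1 − iφ_u)⁻¹ φ_z · e(z)` along the Euler vector field,
expressed by the implicit relation `(1 − iφ_u)·L̃^w = i φ_z e(z)` (componentwise). -/
def IsEulerTransversal {n d : ℕ} (φ Lt : Fin d → MvPowerSeries (Var n d) ℂ) : Prop :=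
  ∀ k : Fin d,
    Lt k - Complex.I •
      (∑ l, psDeriv (Sum.inr (Sum.inr l) : Var n d) (φ k) * Lt l) =
    Complex.I • ∑ j, MvPowerSeries.X (Sum.inl j : Var n d) *
      psDeriv (Sum.inl j : Var n d) (φ k)

namespace Aux17
open MvPowerSeries Finsupp
variable {n d : ℕ}

def tdeg (m : Var n d →₀ ℕ) : ℕ := degZ m + degZb m + degU m

lemma tdeg_eq_sum (m : Var n d →₀ ℕ) : tdeg m = ∑ v : Var n d, m v := by
  simp [tdeg, degZ, degZb, degU, Fintype.sum_sum_type]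
  ring

lemma tdeg_add (p q : Var n d →₀ ℕ) : tdeg (p + q) = tdeg p + tdeg q := by
  simp [tdeg_eq_sum, Finsupp.add_apply, Finset.sum_add_distrib]

lemma tdeg_eq_zero {m : Var n d →₀ ℕ} : tdeg m = 0 ↔ m = 0 := by
  rw [tdeg_eq_sum]
  constructor
  · intro h
    ext v
    have := Finset.sum_eq_zero_iff.mp h v (Finset.mem_univ v)
    simpa using this
  · rintro rfl; simp

lemma tdeg_single (i : Var n d) : tdeg (Finsupp.single i 1) = 1 := by
  simp [tdeg_eq_sum, Finsupp.single_apply]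

lemma coeff_psDeriv (i : Var n d) (f : MvPowerSeries (Var n d) ℂ) (m : Var n d →₀ ℕ) :
    MvPowerSeries.coeff m (psDeriv i f) =
      ((m i : ℂ) + 1) * MvPowerSeries.coeff (m + Finsupp.single i 1) f := rfl

lemma coeff_X_mul_psDeriv (j : Fin n) (f : MvPowerSeries (Var n d) ℂ) (m : Var n d →₀ ℕ) :
    MvPowerSeries.coeff m (MvPowerSeries.X (Sum.inl j : Var n d) * psDeriv (Sum.inl j) f) =
      (m (Sum.inl j) : ℂ) * MvPowerSeries.coeff m f := by
  classical
  rw [show (MvPowerSeries.X (Sum.inl j : Var n d) : MvPowerSeries (Var n d) ℂ)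
      = MvPowerSeries.monomial (Finsupp.single (Sum.inl j : Var n d) 1) 1 from rfl,
    MvPowerSeries.coeff_monomial_mul]
  by_cases h : Finsupp.single (Sum.inl j : Var n d) 1 ≤ m
  · rw [if_pos h, one_mul, coeff_psDeriv, tsub_add_cancel_of_le h]
    have h1 : 1 ≤ m (Sum.inl j) := by
      have := h (Sum.inl j); simpa using this
    rw [Finsupp.tsub_apply, Finsupp.single_apply, if_pos rfl]
    push_cast [Nat.cast_sub h1]
    ring
  · rw [if_neg h]
    have h0 : m (Sum.inl j) = 0 := by
      by_contra h0
      exact h (fun v => by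
        rw [Finsupp.single_apply]
        split
        · next hv => subst hv; omega
        · omega)
    rw [h0]; simp

variable {φ Lt : Fin d → MvPowerSeries (Var n d) ℂ}

lemma coeff_rel (h : IsEulerTransversal φ Lt) (k : Fin d) (m : Var n d →₀ ℕ) :
    MvPowerSeries.coeff m (Lt k) =
      Complex.I * (degZ m : ℂ) * MvPowerSeries.coeff m (φ k)
      + Complex.I * ∑ l, ∑ pq ∈ Finset.HasAntidiagonal.antidiagonal m,
          MvPowerSeries.coeff pq.1 (psDeriv (Sum.inr (Sum.inr l)) (φ k)) *
            MvPowerSeries.coeff pq.2 (Lt l) := by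
  classical
  have := congrArg (MvPowerSeries.coeff m) (h k)
  rw [map_sub, map_smul, map_smul, map_sum, map_sum] at this
  simp only [smul_eq_mul, coeff_X_mul_psDeriv] at this
  simp only [MvPowerSeries.coeff_mul] at this
  have h2 : ∑ j, (m (Sum.inl j) : ℂ) * MvPowerSeries.coeff m (φ k)
      = (degZ m : ℂ) * MvPowerSeries.coeff m (φ k) := by
    rw [← Finset.sum_mul]
    push_cast [degZ]
    ring
  rw [h2] at this
  linear_combination this


lemma tdeg_def' (m : Var n d →₀ ℕ) : degZ m + degZb m + degU m = tdeg m := rfl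

lemma psDeriv_u_zero (h0 : NoConstLin φ) (l k : Fin d) :
    MvPowerSeries.coeff 0 (psDeriv (Sum.inr (Sum.inr l) : Var n d) (φ k)) = 0 := by
  rw [coeff_psDeriv, zero_add]
  rw [h0 k _ (by rw [tdeg_def', tdeg_single])]
  ring

lemma Lt_zero (h0 : NoConstLin φ) (h : IsEulerTransversal φ Lt) (k : Fin d) :
    MvPowerSeries.coeff (0 : Var n d →₀ ℕ) (Lt k) = 0 := by
  rw [coeff_rel h]
  simp [degZ, Finsupp.antidiagonal_zero, psDeriv_u_zero h0]

lemma Lt_low (h0 : NoConstLin φ) (h : IsEulerTransversal φ Lt) {m : Var n d →₀ ℕ}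
    (hm : tdeg m ≤ 1) (k : Fin d) : MvPowerSeries.coeff m (Lt k) = 0 := by
  rw [coeff_rel h]
  rw [h0 k m (by rw [tdeg_def']; exact hm)]
  have hsum : ∀ l : Fin d, ∑ pq ∈ Finset.HasAntidiagonal.antidiagonal m,
      MvPowerSeries.coeff pq.1 (psDeriv (Sum.inr (Sum.inr l)) (φ k)) *
        MvPowerSeries.coeff pq.2 (Lt l) = 0 := by
    intro l
    apply Finset.sum_eq_zero
    intro pq hpq
    rw [Finset.HasAntidiagonal.mem_antidiagonal] at hpq
    have hd : tdeg pq.1 + tdeg pq.2 ≤ 1 := by rw [← tdeg_add, hpq]; exact hm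
    rcases Nat.eq_zero_or_pos (tdeg pq.1) with h1 | h1
    · rw [tdeg_eq_zero.mp h1, psDeriv_u_zero h0, zero_mul]
    · have h2 : tdeg pq.2 = 0 := by omega
      rw [tdeg_eq_zero.mp h2, Lt_zero h0 h, mul_zero]
  simp [hsum]

lemma Lt_agree {ψ Ltψ : Fin d → MvPowerSeries (Var n d) ℂ}
    (hφ0 : NoConstLin φ) (hψ0 : NoConstLin ψ)
    (hφL : IsEulerTransversal φ Lt) (hψL : IsEulerTransversal ψ Ltψ)
    (N : ℕ) (H : ∀ m : Var n d →₀ ℕ, tdeg m < N → ∀ k,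
      MvPowerSeries.coeff m (φ k) = MvPowerSeries.coeff m (ψ k)) :
    ∀ (D : ℕ) (m : Var n d →₀ ℕ), tdeg m = D → tdeg m < N → ∀ k,
      MvPowerSeries.coeff m (Lt k) = MvPowerSeries.coeff m (Ltψ k) := by
  intro D
  induction D using Nat.strong_induction_on with
  | _ D ih =>
    intro m hmD hmN k
    rw [coeff_rel hφL, coeff_rel hψL, H m hmN k]
    congr 1
    congr 1
    apply Finset.sum_congr rfl
    intro l _
    apply Finset.sum_congr rfl
    intro pq hpq
    rw [Finset.HasAntidiagonal.mem_antidiagonal] at hpq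
    have hd : tdeg pq.1 + tdeg pq.2 = D := by rw [← tdeg_add, hpq, hmD]
    rcases Nat.eq_zero_or_pos (tdeg pq.1) with h1 | h1
    · rw [tdeg_eq_zero.mp h1, psDeriv_u_zero hφ0, psDeriv_u_zero hψ0, zero_mul, zero_mul]
    rcases Nat.eq_zero_or_pos (tdeg pq.2) with h2 | h2
    · rw [tdeg_eq_zero.mp h2, Lt_zero hφ0 hφL, Lt_zero hψ0 hψL, mul_zero, mul_zero]
    have hq : MvPowerSeries.coeff pq.2 (Lt l) = MvPowerSeries.coeff pq.2 (Ltψ l) :=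
      ih (tdeg pq.2) (by omega) pq.2 rfl (by omega) l
    have hp : MvPowerSeries.coeff pq.1 (psDeriv (Sum.inr (Sum.inr l)) (φ k)) =
        MvPowerSeries.coeff pq.1 (psDeriv (Sum.inr (Sum.inr l)) (ψ k)) := by
      rw [coeff_psDeriv, coeff_psDeriv, H _ (by
        rw [tdeg_add, tdeg_single]; omega) k]
    rw [hp, hq]

lemma defect {ψ Ltψ : Fin d → MvPowerSeries (Var n d) ℂ}
    (hφ0 : NoConstLin φ) (hψ0 : NoConstLin ψ)
    (hφL : IsEulerTransversal φ Lt) (hψL : IsEulerTransversal ψ Ltψ)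
    (N : ℕ) (H : ∀ m : Var n d →₀ ℕ, tdeg m < N → ∀ k,
      MvPowerSeries.coeff m (φ k) = MvPowerSeries.coeff m (ψ k))
    (m : Var n d →₀ ℕ) (hm : tdeg m = N) (k : Fin d) :
    MvPowerSeries.coeff m (Lt k) - Complex.I * (degZ m : ℂ) * MvPowerSeries.coeff m (φ k)
      = MvPowerSeries.coeff m (Ltψ k)
        - Complex.I * (degZ m : ℂ) * MvPowerSeries.coeff m (ψ k) := by
  rw [coeff_rel hφL, coeff_rel hψL]
  ring_nf
  have : ∀ l : Fin d, ∑ pq ∈ Finset.HasAntidiagonal.antidiagonal m,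
      MvPowerSeries.coeff pq.1 (psDeriv (Sum.inr (Sum.inr l)) (φ k)) *
        MvPowerSeries.coeff pq.2 (Lt l)
      = ∑ pq ∈ Finset.HasAntidiagonal.antidiagonal m,
      MvPowerSeries.coeff pq.1 (psDeriv (Sum.inr (Sum.inr l)) (ψ k)) *
        MvPowerSeries.coeff pq.2 (Ltψ l) := by
    intro l
    apply Finset.sum_congr rfl
    intro pq hpq
    rw [Finset.HasAntidiagonal.mem_antidiagonal] at hpq
    have hd : tdeg pq.1 + tdeg pq.2 = N := by rw [← tdeg_add, hpq, hm]
    rcases Nat.eq_zero_or_pos (tdeg pq.1) with h1 | h1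
    · rw [tdeg_eq_zero.mp h1, psDeriv_u_zero hφ0, psDeriv_u_zero hψ0, zero_mul, zero_mul]
    rcases Nat.lt_or_ge (tdeg pq.2) 2 with h2 | h2
    · rw [Lt_low hφ0 hφL (by omega), Lt_low hψ0 hψL (by omega), mul_zero, mul_zero]
    have hq : MvPowerSeries.coeff pq.2 (Lt l) = MvPowerSeries.coeff pq.2 (Ltψ l) :=
      Lt_agree hφ0 hψ0 hφL hψL N H (tdeg pq.2) pq.2 rfl (by omega) l
    have hp : MvPowerSeries.coeff pq.1 (psDeriv (Sum.inr (Sum.inr l)) (φ k)) =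
        MvPowerSeries.coeff pq.1 (psDeriv (Sum.inr (Sum.inr l)) (ψ k)) := by
      rw [coeff_psDeriv, coeff_psDeriv, H _ (by
        rw [tdeg_add, tdeg_single]; omega) k]
    rw [hp, hq]
  simp only [this]

lemma coeff_dpoly (a b c : ℕ) (f : MvPowerSeries (Var n d) ℂ) (m : Var n d →₀ ℕ) :
    MvPowerSeries.coeff m (dpoly a b c f) =
      if degZ m = a ∧ degZb m = b ∧ degU m = c
      then (a.factorial * b.factorial * c.factorial : ℂ) * MvPowerSeries.coeff m f else 0 :=
  rfl

lemma factC_ne (a b c : ℕ) : (a.factorial * b.factorial * c.factorial : ℂ) ≠ 0 := by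
  exact mul_ne_zero (mul_ne_zero (Nat.cast_ne_zero.mpr a.factorial_ne_zero)
    (Nat.cast_ne_zero.mpr b.factorial_ne_zero)) (Nat.cast_ne_zero.mpr c.factorial_ne_zero)

end Aux17

/-- Formulas (6.6)–(6.9): for `L̃^w = i(1−iφ_u)⁻¹φ_z·e(z)`, one has
`L̃^w_{z^a z̄^b u^c} = i a φ_{z^a z̄^b u^c} + R_{a,b,c}(φ_*)` with `R_{a,b,c}` depending only
on the derivatives of `φ` of order `< a+b+c` (expressed here by saying that the defect
`L̃^w_{z^a z̄^b u^c} − i a φ_{z^a z̄^b u^c}` agrees for any two `φ`'s with the same lower-order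
derivatives); consequently `L̃^w` together with the no-harmonic-terms normalization
`φ_{z̄^b u^c} = 0` determines `φ` uniquely. -/
theorem stmt17 (n d : ℕ)
    (φ ψ Ltφ Ltψ : Fin d → MvPowerSeries (Var n d) ℂ)
    (hφ0 : NoConstLin φ) (hψ0 : NoConstLin ψ)
    (hφL : IsEulerTransversal φ Ltφ) (hψL : IsEulerTransversal ψ Ltψ) :
    -- the defect depends only on the lower-order derivatives of φ
    (∀ a b c : ℕ, 1 ≤ a →
      (∀ a' b' c' : ℕ, a' + b' + c' < a + b + c →
        ∀ k, dpoly a' b' c' (φ k) = dpoly a' b' c' (ψ k)) →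
      ∀ k, dpoly a b c (Ltφ k) - (Complex.I * a) • dpoly a b c (φ k) =
        dpoly a b c (Ltψ k) - (Complex.I * a) • dpoly a b c (ψ k)) ∧
    -- uniqueness of φ given L̃^w and the no-harmonic-terms condition
    ((∀ (k : Fin d) (m : Var n d →₀ ℕ), degZ m = 0 → MvPowerSeries.coeff m (φ k) = 0) →
     (∀ (k : Fin d) (m : Var n d →₀ ℕ), degZ m = 0 → MvPowerSeries.coeff m (ψ k) = 0) →
     Ltφ = Ltψ → φ = ψ) := by
  classical
  constructor
  · intro a b c _ Hd k
    have H : ∀ m : Var n d →₀ ℕ, Aux17.tdeg m < a + b + c → ∀ k',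
        MvPowerSeries.coeff m (φ k') = MvPowerSeries.coeff m (ψ k') := by
      intro m hm k'
      have h1 := congrArg (MvPowerSeries.coeff m)
        (Hd (degZ m) (degZb m) (degU m) hm k')
      rw [Aux17.coeff_dpoly, Aux17.coeff_dpoly, if_pos ⟨rfl, rfl, rfl⟩,
        if_pos ⟨rfl, rfl, rfl⟩] at h1
      exact mul_left_cancel₀ (Aux17.factC_ne _ _ _) h1
    apply MvPowerSeries.ext
    intro m
    rw [map_sub, map_sub, map_smul, map_smul, Aux17.coeff_dpoly, Aux17.coeff_dpoly,
      Aux17.coeff_dpoly, Aux17.coeff_dpoly]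
    by_cases hc : degZ m = a ∧ degZb m = b ∧ degU m = c
    · rw [if_pos hc, if_pos hc, if_pos hc, if_pos hc]
      have hD := Aux17.defect hφ0 hψ0 hφL hψL (a + b + c) H m
        (by unfold Aux17.tdeg; omega) k
      rw [hc.1] at hD
      set C := (a.factorial * b.factorial * c.factorial : ℂ)
      simp only [smul_eq_mul]
      linear_combination C * hD
    · rw [if_neg hc, if_neg hc, if_neg hc, if_neg hc]
  · intro hφh hψh hL
    have key : ∀ (N : ℕ) (m : Var n d →₀ ℕ), Aux17.tdeg m = N → ∀ k,
        MvPowerSeries.coeff m (φ k) = MvPowerSeries.coeff m (ψ k) := by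
      intro N
      induction N using Nat.strong_induction_on with
      | _ N ih =>
        intro m hm k
        by_cases hz : degZ m = 0
        · rw [hφh k m hz, hψh k m hz]
        · have hD := Aux17.defect hφ0 hψ0 hφL hψL N
            (fun m' hm' k' => ih _ (hm ▸ hm') m' rfl k') m hm k
          rw [hL] at hD
          have hne : Complex.I * (degZ m : ℂ) ≠ 0 :=
            mul_ne_zero Complex.I_ne_zero (Nat.cast_ne_zero.mpr hz)
          apply mul_left_cancel₀ hne
          linear_combination -hD
    funext k
    exact MvPowerSeries.ext fun m => key _ m rfl k
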